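/- Fix s, q ∈ ℕ and ε ∈ (0,1), let A be a finite set, let Λ be a finitely supported distribution on [0,1]^A, and let η, η̃ be two distributions on A with dTV(η, η̃) ≤ ε/s. Then dTV(D_sim(η,Λ), D_sim(η̃,Λ)) ≤ ε. -/
import Mathlib


open scoped BigOperators

namespace HugeObject

noncomputable section

/-- A finitely supported probability distribution on `Ω`, given by its mass function. -/
def IsDist {Ω : Type*} (μ : Ω → ℝ) : Prop :=
  (∀ x, 0 ≤ μ x) ∧ (Function.support μ).Finite ∧ ∑ᶠ x, μ x = 1

/-- Total variation distance between two mass functions. -/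
def dTV {Ω : Type*} (μ τ : Ω → ℝ) : ℝ :=
  (1 / 2) * ∑ᶠ x, |μ x - τ x|

/-- `T` is a transfer distribution (coupling) between `μ` and `τ`. -/
def IsCoupling {A B : Type*} (T : A × B → ℝ) (μ : A → ℝ) (τ : B → ℝ) : Prop :=
  IsDist T ∧ (∀ a, ∑ᶠ b, T (a, b) = μ a) ∧ (∀ b, ∑ᶠ a, T (a, b) = τ b)

/-- Earth Mover distance with respect to a distance function `d`: the infimum, over
all transfer distributions between `μ` and `τ`, of the expected distance. -/
def dEM {Ω : Type*} (d : Ω → Ω → ℝ) (μ τ : Ω → ℝ) : ℝ :=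
  sInf {c | ∃ T : Ω × Ω → ℝ, IsCoupling T μ τ ∧ c = ∑ᶠ p : Ω × Ω, T p * d p.1 p.2}

/-- η-weighted ℓ1 distance between vectors. -/
def wl1 {A : Type*} (η : A → ℝ) (x y : A → ℝ) : ℝ := ∑ᶠ a, η a * |x a - y a|

/-- A distribution on vectors is supported on `[0,1]^A`. -/
def SuppIn01 {A : Type*} (Λ : (A → ℝ) → ℝ) : Prop :=
  ∀ t, Λ t ≠ 0 → ∀ a, t a ∈ Set.Icc (0 : ℝ) 1

/-- Empirical distribution of the tuple `t` (distribution of `t I` for uniform `I`). -/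
def empDist {n : ℕ} {α : Type*} (t : Fin n → α) : α → ℝ :=
  fun u => (Nat.card {i : Fin n // t i = u} : ℝ) / n

/-- Normalized Hamming distance on `{0,1}^n`. -/
def normHamming (n : ℕ) (x y : Fin n → Bool) : ℝ :=
  (Nat.card {i : Fin n // x i ≠ y i} : ℝ) / n

section Detailing

variable {n : ℕ} {A : Type*} [Fintype A]

/-- Weight distribution (second marginal) of a detailing. -/
def weight (ξ : (Fin n → Bool) × A → ℝ) (a : A) : ℝ := ∑ x : Fin n → Bool, ξ (x, a)

/-- `ξ` is a detailing of `μ` with respect to `A`: a distribution on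
`{0,1}^n × A` whose first marginal is `μ`. -/
def IsDetailing (ξ : (Fin n → Bool) × A → ℝ) (μ : (Fin n → Bool) → ℝ) : Prop :=
  IsDist ξ ∧ ∀ x, ∑ a : A, ξ (x, a) = μ x

/-- Component distribution `μ_a` of a detailing. -/
def component (ξ : (Fin n → Bool) × A → ℝ) (a : A) : (Fin n → Bool) → ℝ :=
  fun x => ξ (x, a) / weight ξ a

/-- The type of index `i`: `t_i a = Pr_{x ~ μ_a} [x i = 1]` (0 when the weight vanishes). -/
def typeOf (ξ : (Fin n → Bool) × A → ℝ) (i : Fin n) : A → ℝ :=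
  fun a => (∑ x : Fin n → Bool, if x i then ξ (x, a) else 0) / weight ξ a

/-- The type distribution of a detailing: distribution of `typeOf ξ I` for uniform `I`. -/
def typeDist (ξ : (Fin n → Bool) × A → ℝ) : (A → ℝ) → ℝ :=
  empDist (fun i : Fin n => typeOf ξ i)

/-- The index of a detailing. -/
def ind (ξ : (Fin n → Bool) × A → ℝ) : ℝ :=
  (∑ i : Fin n, ∑ a : A, weight ξ a * typeOf ξ i a ^ 2) / n

end Detailing

section Goodness

variable {n q : ℕ}

/-- Marginal of coordinate `j`. -/
def margAt (ν : (Fin n → Bool) → ℝ) (j : Fin n) : Bool → ℝ :=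
  fun b => ∑ x : Fin n → Bool, if x j = b then ν x else 0

/-- Joint distribution of the coordinates listed in `J`. -/
def jointAt (ν : (Fin n → Bool) → ℝ) (J : Fin q → Fin n) : (Fin q → Bool) → ℝ :=
  fun y => ∑ x : Fin n → Bool, if ∀ ℓ, x (J ℓ) = y ℓ then ν x else 0

/-- The tuple `J` is ε-independent with respect to `ν`. -/
def EpsIndep (ε : ℝ) (ν : (Fin n → Bool) → ℝ) (J : Fin q → Fin n) : Prop :=
  dTV (jointAt ν J) (fun y => ∏ ℓ, margAt ν (J ℓ) (y ℓ)) ≤ ε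

/-- A distribution on `{0,1}^n` is (ε,q)-good. -/
def IsGoodDist (ε : ℝ) (q : ℕ) (ν : (Fin n → Bool) → ℝ) : Prop :=
  (1 - ε) * (n : ℝ) ^ q ≤ (Nat.card {J : Fin q → Fin n // EpsIndep ε ν J} : ℝ)

/-- A detailing is (ε,q)-good. -/
def IsGoodDetailing {A : Type*} [Fintype A] (ε : ℝ) (q : ℕ)
    (ξ : (Fin n → Bool) × A → ℝ) : Prop :=
  ∃ J : Finset A, 1 - ε ≤ ∑ a ∈ J, weight ξ a ∧ ∀ a ∈ J, IsGoodDist ε q (component ξ a)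

end Goodness

/-- The simulated distribution `D_sim(η, Λ)` on `{0,1}^{s×q}`. -/
def Dsim {A : Type*} [Fintype A] (s q : ℕ) (η : A → ℝ) (Λ : (A → ℝ) → ℝ) :
    (Fin s → Fin q → Bool) → ℝ :=
  fun M => ∑ᶠ T : Fin q → (A → ℝ),
    (∏ j, Λ (T j)) * ∑ a : Fin s → A, (∏ i, η (a i)) *
      ∏ i : Fin s, ∏ j : Fin q, if M i j then T j (a i) else 1 - T j (a i)

/-- The canonical (s,q) test distribution `D_test` for `μ`. -/
def Dtest (s q n : ℕ) (μ : (Fin n → Bool) → ℝ) : (Fin s → Fin q → Bool) → ℝ :=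
  fun M => (∑ J : Fin q → Fin n, ∑ x : Fin s → Fin n → Bool,
    (∏ i, μ (x i)) * (if ∀ i ℓ, x i (J ℓ) = M i ℓ then (1 : ℝ) else 0)) / (n : ℝ) ^ q

/-- Flat refinement of the detailing `ξ` with respect to `η` on `A × B`. -/
def flatRef {n : ℕ} {A B : Type*} [Fintype A] (ξ : (Fin n → Bool) × A → ℝ)
    (η : A × B → ℝ) : (Fin n → Bool) × (A × B) → ℝ :=
  fun p => η p.2 * component ξ p.2.1 p.1

/-- One-step transition probability of the Change-types construction:
probability of outputting `yi` at a coordinate with source value `xi`,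
source type value `h1` and target type value `h2`. -/
def flipStep (h1 h2 : ℝ) (xi yi : Bool) : ℝ :=
  if xi then (if yi then 1 - max 0 ((h1 - h2) / h1) else max 0 ((h1 - h2) / h1))
  else (if yi then max 0 ((h2 - h1) / (1 - h1)) else 1 - max 0 ((h2 - h1) / (1 - h1)))

/-- The output distribution `Ξ` of the Change-types construction. -/
def changeTypes {n : ℕ} {A B : Type*} [Fintype A] (ξ : (Fin n → Bool) × A → ℝ)
    (η : A × B → ℝ) (H : Fin n → (A × B → ℝ) × (A × B → ℝ)) :
    (Fin n → Bool) × (Fin n → Bool) × (A × B) → ℝ :=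
  fun p => η p.2.2 * component ξ p.2.2.1 p.1 *
    ∏ i, flipStep ((H i).1 p.2.2) ((H i).2 p.2.2) (p.1 i) (p.2.1 i)

/-- Pushforward of a mass function along `f`. -/
def push {α β : Type*} (f : α → β) (μ : α → ℝ) : β → ℝ :=
  fun b => ∑ᶠ a ∈ {a | f a = b}, μ a

/-- Rounding to the nearest integer multiple of `ρ`. -/
def roundMul (ρ x : ℝ) : ℝ := ρ * round (x / ρ)

/-- Adjustment of `η` to `ν`. -/
def adjust {A B : Type*} [Fintype B] (ν : A → ℝ) (η : A × B → ℝ) : A × B → ℝ :=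
  fun p => ν p.1 * (η p / ∑ b : B, η (p.1, b))

end
end HugeObject

open HugeObject

private lemma sum_pi_prod {ι A : Type*} [Fintype ι] [DecidableEq ι] [Fintype A]
    (g : ι → A → ℝ) : ∑ a : ι → A, ∏ i, g i (a i) = ∏ i, ∑ x, g i x := by
  rw [Finset.prod_univ_sum, Fintype.piFinset_univ]

private lemma tele_prod {A : Type*} [Fintype A] (η η' : A → ℝ)
    (hη0 : ∀ x, 0 ≤ η x) (hη'0 : ∀ x, 0 ≤ η' x)
    (hη1 : ∑ x, η x = 1) (hη'1 : ∑ x, η' x = 1) (s : ℕ) :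
    ∑ a : Fin s → A, |(∏ i, η (a i)) - ∏ i, η' (a i)|
      ≤ s * ∑ x, |η x - η' x| := by
  induction s with
  | zero => simp
  | succ n ih =>
    classical
    set δ := ∑ x, |η x - η' x| with hδdef
    have hδ0 : 0 ≤ δ := Finset.sum_nonneg fun x _ => abs_nonneg _
    have hQ : ∑ a : Fin n → A, ∏ i, η' (a i) = 1 := by
      rw [sum_pi_prod]; simp [hη'1]
    have step : ∑ a : Fin (n+1) → A, |(∏ i, η (a i)) - ∏ i, η' (a i)|
        = ∑ x : A, ∑ a : Fin n → A,
            |η x * ∏ i, η (a i) - η' x * ∏ i, η' (a i)| := by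
      rw [← (Fin.consEquiv fun _ : Fin (n+1) => A).sum_comp
            (fun a => |(∏ i, η (a i)) - ∏ i, η' (a i)|)]
      rw [Fintype.sum_prod_type]
      refine Finset.sum_congr rfl fun x _ => Finset.sum_congr rfl fun a _ => ?_
      simp [Fin.consEquiv, Fin.prod_univ_succ]
    rw [step]
    have bound : ∀ (x : A) (a : Fin n → A),
        |η x * ∏ i, η (a i) - η' x * ∏ i, η' (a i)|
          ≤ η x * |(∏ i, η (a i)) - ∏ i, η' (a i)|
            + |η x - η' x| * ∏ i, η' (a i) := by
      intro x a
      have h1 : η x * ∏ i, η (a i) - η' x * ∏ i, η' (a i)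
          = η x * ((∏ i, η (a i)) - ∏ i, η' (a i))
            + (η x - η' x) * ∏ i, η' (a i) := by ring
      rw [h1]
      refine (abs_add_le _ _).trans (le_of_eq ?_)
      rw [abs_mul, abs_mul, abs_of_nonneg (hη0 x),
        abs_of_nonneg (Finset.prod_nonneg fun i _ => hη'0 _)]
    have e1 : ∑ x : A, ∑ a : Fin n → A,
        (η x * |(∏ i, η (a i)) - ∏ i, η' (a i)|
          + |η x - η' x| * ∏ i, η' (a i))
        = (∑ x, η x) * (∑ a : Fin n → A, |(∏ i, η (a i)) - ∏ i, η' (a i)|)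
          + δ * ∑ a : Fin n → A, ∏ i, η' (a i) := by
      rw [Finset.sum_mul, Finset.sum_mul]
      rw [← Finset.sum_add_distrib]
      refine Finset.sum_congr rfl fun x _ => ?_
      rw [Finset.mul_sum, Finset.mul_sum, ← Finset.sum_add_distrib]
    calc ∑ x : A, ∑ a : Fin n → A,
          |η x * ∏ i, η (a i) - η' x * ∏ i, η' (a i)|
        ≤ ∑ x : A, ∑ a : Fin n → A,
            (η x * |(∏ i, η (a i)) - ∏ i, η' (a i)|
              + |η x - η' x| * ∏ i, η' (a i)) :=
          Finset.sum_le_sum fun x _ => Finset.sum_le_sum fun a _ => bound x a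
      _ = (∑ x, η x) * (∑ a : Fin n → A, |(∏ i, η (a i)) - ∏ i, η' (a i)|)
          + δ * ∑ a : Fin n → A, ∏ i, η' (a i) := e1
      _ ≤ (n + 1 : ℕ) * δ := by
          rw [hη1, hQ, one_mul, mul_one]
          push_cast
          linarith [ih]

/-- if dTV(η, η̃) ≤ ε/s then the simulated distributions D_sim(η,Λ)
and D_sim(η̃,Λ) are ε-close in total variation distance. -/
theorem dsim_weight_continuity {A : Type*} [Fintype A] (s q : ℕ) (ε : ℝ)
    (hε : ε ∈ Set.Ioo (0 : ℝ) 1)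
    (Λ : (A → ℝ) → ℝ) (hΛ : IsDist Λ) (hΛ01 : SuppIn01 Λ)
    (η η' : A → ℝ) (hη : IsDist η) (hη' : IsDist η')
    (h : dTV η η' ≤ ε / s) :
    dTV (Dsim s q η Λ) (Dsim s q η' Λ) ≤ ε := by
  classical
  obtain ⟨hΛ0, hΛfin, hΛsum⟩ := hΛ
  obtain ⟨hη0, -, hηsum⟩ := hη
  obtain ⟨hη'0, -, hη'sum⟩ := hη'
  have hηsum' : ∑ x : A, η x = 1 := by rw [← finsum_eq_sum_of_fintype]; exact hηsum
  have hη'sum' : ∑ x : A, η' x = 1 := by rw [← finsum_eq_sum_of_fintype]; exact hη'sum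
  set δ := ∑ x : A, |η x - η' x| with hδdef
  have hdtv : dTV η η' = δ / 2 := by
    rw [dTV, finsum_eq_sum_of_fintype]; ring
  have hδ0 : 0 ≤ δ := Finset.sum_nonneg fun x _ => abs_nonneg _
  set S : Finset (A → ℝ) := hΛfin.toFinset with hSdef
  have hSmem : ∀ t ∈ S, Λ t ≠ 0 := by
    intro t ht
    simpa [hSdef, Set.Finite.mem_toFinset, Function.mem_support] using ht
  set P : Finset (Fin q → (A → ℝ)) := Fintype.piFinset fun _ => S with hPdef
  -- rewrite Dsim as a finite sum
  have hDsim : ∀ θ : A → ℝ, ∀ M, Dsim s q θ Λ M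
      = ∑ T ∈ P, (∏ j, Λ (T j)) * ∑ a : Fin s → A, (∏ i, θ (a i)) *
          ∏ i, ∏ j, (if M i j then T j (a i) else 1 - T j (a i)) := by
    intro θ M
    rw [Dsim]
    apply finsum_eq_finset_sum_of_support_subset
    intro T hT
    simp only [Function.mem_support] at hT
    have h1 : ∏ j, Λ (T j) ≠ 0 := left_ne_zero_of_mul hT
    have h2 : ∀ j, Λ (T j) ≠ 0 := by
      intro j hj
      exact h1 (Finset.prod_eq_zero (Finset.mem_univ j) hj)
    refine Fintype.mem_piFinset.mpr fun j => ?_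
    rw [Set.Finite.mem_toFinset]
    exact h2 j
  have hT01 : ∀ T ∈ P, ∀ j (x : A), T j x ∈ Set.Icc (0:ℝ) 1 := by
    intro T hT j x
    exact hΛ01 (T j) (hSmem _ ((Fintype.mem_piFinset.mp hT) j)) x
  -- the kernel sums to one
  have hKsum : ∀ (T : Fin q → (A → ℝ)) (a : Fin s → A),
      ∑ M : Fin s → Fin q → Bool,
        ∏ i, ∏ j, (if M i j then T j (a i) else 1 - T j (a i)) = 1 := by
    intro T a
    rw [sum_pi_prod (g := fun i (m : Fin q → Bool) =>
      ∏ j, if m j then T j (a i) else 1 - T j (a i))]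
    refine Finset.prod_eq_one fun i _ => ?_
    rw [sum_pi_prod (g := fun j (b : Bool) => if b then T j (a i) else 1 - T j (a i))]
    refine Finset.prod_eq_one fun j _ => ?_
    rw [Fintype.sum_bool]
    simp
  -- the kernel is nonnegative
  have hK0 : ∀ T ∈ P, ∀ (a : Fin s → A) (M : Fin s → Fin q → Bool),
      0 ≤ ∏ i, ∏ j, (if M i j then T j (a i) else 1 - T j (a i)) := by
    intro T hT a M
    refine Finset.prod_nonneg fun i _ => Finset.prod_nonneg fun j _ => ?_
    rcases hT01 T hT j (a i) with ⟨h1, h2⟩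
    by_cases hb : M i j <;> simp [hb] <;> linarith
  -- the core per-T bound
  have hcore : ∀ T ∈ P,
      ∑ M : Fin s → Fin q → Bool,
        |∑ a : Fin s → A, ((∏ i, η (a i)) - ∏ i, η' (a i)) *
            ∏ i, ∏ j, (if M i j then T j (a i) else 1 - T j (a i))|
        ≤ s * δ := by
    intro T hT
    calc ∑ M : Fin s → Fin q → Bool,
          |∑ a : Fin s → A, ((∏ i, η (a i)) - ∏ i, η' (a i)) *
              ∏ i, ∏ j, (if M i j then T j (a i) else 1 - T j (a i))|
        ≤ ∑ M : Fin s → Fin q → Bool, ∑ a : Fin s → A,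
            |(∏ i, η (a i)) - ∏ i, η' (a i)| *
              ∏ i, ∏ j, (if M i j then T j (a i) else 1 - T j (a i)) := by
          refine Finset.sum_le_sum fun M _ => ?_
          refine (Finset.abs_sum_le_sum_abs _ _).trans (le_of_eq ?_)
          refine Finset.sum_congr rfl fun a _ => ?_
          rw [abs_mul, abs_of_nonneg (hK0 T hT a M)]
      _ = ∑ a : Fin s → A, |(∏ i, η (a i)) - ∏ i, η' (a i)| *
            ∑ M : Fin s → Fin q → Bool,
              ∏ i, ∏ j, (if M i j then T j (a i) else 1 - T j (a i)) := by
          rw [Finset.sum_comm]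
          exact Finset.sum_congr rfl fun a _ => by rw [← Finset.mul_sum]
      _ = ∑ a : Fin s → A, |(∏ i, η (a i)) - ∏ i, η' (a i)| := by
          refine Finset.sum_congr rfl fun a _ => ?_
          rw [hKsum T a, mul_one]
      _ ≤ s * δ := tele_prod η η' hη0 hη'0 hηsum' hη'sum' s
  have hΛT0 : ∀ T : Fin q → (A → ℝ), 0 ≤ ∏ j, Λ (T j) :=
    fun T => Finset.prod_nonneg fun j _ => hΛ0 _
  have hPsum : ∑ T ∈ P, ∏ j, Λ (T j) = 1 := by
    have hS1 : ∑ t ∈ S, Λ t = 1 := by rw [← finsum_eq_sum Λ hΛfin]; exact hΛsum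
    rw [hPdef, ← Finset.prod_univ_sum]
    simp [hS1]
  have hdiff : ∀ M : Fin s → Fin q → Bool, Dsim s q η Λ M - Dsim s q η' Λ M
      = ∑ T ∈ P, (∏ j, Λ (T j)) *
          ∑ a : Fin s → A, ((∏ i, η (a i)) - ∏ i, η' (a i)) *
            ∏ i, ∏ j, (if M i j then T j (a i) else 1 - T j (a i)) := by
    intro M
    rw [hDsim η M, hDsim η' M, ← Finset.sum_sub_distrib]
    refine Finset.sum_congr rfl fun T _ => ?_
    rw [← mul_sub, ← Finset.sum_sub_distrib]
    congr 1
    exact Finset.sum_congr rfl fun a _ => by ring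
  have hM : ∑ M : Fin s → Fin q → Bool,
      |Dsim s q η Λ M - Dsim s q η' Λ M| ≤ s * δ := by
    calc ∑ M : Fin s → Fin q → Bool, |Dsim s q η Λ M - Dsim s q η' Λ M|
        ≤ ∑ M : Fin s → Fin q → Bool, ∑ T ∈ P, (∏ j, Λ (T j)) *
            |∑ a : Fin s → A, ((∏ i, η (a i)) - ∏ i, η' (a i)) *
              ∏ i, ∏ j, (if M i j then T j (a i) else 1 - T j (a i))| := by
          refine Finset.sum_le_sum fun M _ => ?_
          rw [hdiff M]
          refine (Finset.abs_sum_le_sum_abs _ _).trans (le_of_eq ?_)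
          refine Finset.sum_congr rfl fun T _ => ?_
          rw [abs_mul, abs_of_nonneg (hΛT0 T)]
      _ = ∑ T ∈ P, (∏ j, Λ (T j)) * ∑ M : Fin s → Fin q → Bool,
            |∑ a : Fin s → A, ((∏ i, η (a i)) - ∏ i, η' (a i)) *
              ∏ i, ∏ j, (if M i j then T j (a i) else 1 - T j (a i))| := by
          rw [Finset.sum_comm]
          exact Finset.sum_congr rfl fun T _ => by rw [← Finset.mul_sum]
      _ ≤ ∑ T ∈ P, (∏ j, Λ (T j)) * (s * δ) :=
          Finset.sum_le_sum fun T hT =>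
            mul_le_mul_of_nonneg_left (hcore T hT) (hΛT0 T)
      _ = s * δ := by rw [← Finset.sum_mul, hPsum, one_mul]
  calc dTV (Dsim s q η Λ) (Dsim s q η' Λ)
      ≤ (1/2) * (s * δ) := by
        rw [dTV, finsum_eq_sum_of_fintype]
        have h2 : (0:ℝ) < 1/2 := by norm_num
        nlinarith [hM]
    _ = s * dTV η η' := by rw [hdtv]; ring
    _ ≤ s * (ε / s) := mul_le_mul_of_nonneg_left h (Nat.cast_nonneg s)
    _ ≤ ε := by
        by_cases hs : (s:ℝ) = 0
        · rw [hs, zero_mul]; exact hε.1.le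
        · rw [mul_comm, div_mul_cancel₀ _ hs]
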